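/- arXiv:2311.10046 — 8 statements merged into one kernel-verified Lean document; each statement's English description precedes it below -/
import Mathlib

section
/- Let O = (1 1; 0 1) and I = (1 0; 1 1) be 2×2 matrices. For any finite words u, v over {O, I} of the same length n, if u ≠ v as words and neither is obtained from the other by the relation described below, then the interiors of the cones (product of u)·ℝ₊² and (product of v)·ℝ₊² are disjoint. Specifically: u·ℝ₊² ∩ v·ℝ₊² ≠ {0} if and only if either u = v, or there exists a common prefix w and a tail such that after the first position where they differ (one has O, the other I), the word with O continues with all I's and the word with I continues with all O's. -/
open Matrix

/-- The letter `false` stands for `O = !![1,1;0,1]`, the letter `true`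
stands for `I = !![1,0;1,1]`. -/
noncomputable def letterMat : Bool → Matrix (Fin 2) (Fin 2) ℝ
  | false => !![1, 1; 0, 1]
  | true  => !![1, 0; 1, 1]

/-- The matrix product of the letters of a word. -/
noncomputable def wordProd (u : List Bool) : Matrix (Fin 2) (Fin 2) ℝ :=
  (u.map letterMat).prod

/-- The cone `m · ℝ₊²`. -/
def matCone (m : Matrix (Fin 2) (Fin 2) ℝ) : Set (Fin 2 → ℝ) :=
  {y | ∃ v : Fin 2 → ℝ, (∀ i, 0 ≤ v i) ∧ y = m.mulVec v}

lemma wordProd_nil : wordProd [] = 1 := rfl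

lemma wordProd_cons (a : Bool) (u : List Bool) :
    wordProd (a :: u) = letterMat a * wordProd u := by
  simp [wordProd]

lemma mem_matCone {m : Matrix (Fin 2) (Fin 2) ℝ} {x : Fin 2 → ℝ} :
    x ∈ matCone m ↔ ∃ v : Fin 2 → ℝ, (∀ i, 0 ≤ v i) ∧ x = m.mulVec v := Iff.rfl

lemma O_mulVec (y : Fin 2 → ℝ) :
    (!![1, 1; 0, 1] : Matrix (Fin 2) (Fin 2) ℝ).mulVec y = ![y 0 + y 1, y 1] := by
  funext i
  fin_cases i <;> simp [Matrix.mulVec, dotProduct, Fin.sum_univ_two]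

lemma I_mulVec (y : Fin 2 → ℝ) :
    (!![1, 0; 1, 1] : Matrix (Fin 2) (Fin 2) ℝ).mulVec y = ![y 0, y 0 + y 1] := by
  funext i
  fin_cases i <;> simp [Matrix.mulVec, dotProduct, Fin.sum_univ_two]

lemma letter_inv (a : Bool) :
    ∃ B : Matrix (Fin 2) (Fin 2) ℝ, B * letterMat a = 1 := by
  cases a
  · exact ⟨!![1, -1; 0, 1], by simp [letterMat]; rw [← Matrix.one_fin_two]⟩
  · exact ⟨!![1, 0; -1, 1], by simp [letterMat]; rw [← Matrix.one_fin_two]⟩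

lemma letter_inj (a : Bool) : Function.Injective (letterMat a).mulVec := by
  obtain ⟨B, hB⟩ := letter_inv a
  intro x y h
  have h2 := congrArg B.mulVec h
  rwa [Matrix.mulVec_mulVec, Matrix.mulVec_mulVec, hB, Matrix.one_mulVec,
    Matrix.one_mulVec] at h2

lemma wordProd_nonneg (u : List Bool) : ∀ i j, 0 ≤ wordProd u i j := by
  induction u with
  | nil => intro i j; rw [wordProd_nil]; fin_cases i <;> fin_cases j <;> norm_num
  | cons a u ih =>
    intro i j
    rw [wordProd_cons, Matrix.mul_apply]
    apply Finset.sum_nonneg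
    intro k _
    have h1 : 0 ≤ letterMat a i k := by
      cases a <;> fin_cases i <;> fin_cases k <;> norm_num [letterMat]
    exact mul_nonneg h1 (ih k j)

lemma matCone_nonneg {u : List Bool} {x : Fin 2 → ℝ} (hx : x ∈ matCone (wordProd u)) :
    ∀ i, 0 ≤ x i := by
  obtain ⟨v, hv, rfl⟩ := hx
  intro i
  rw [Matrix.mulVec, dotProduct]
  exact Finset.sum_nonneg fun j _ => mul_nonneg (wordProd_nonneg u i j) (hv j)

lemma matCone_mul (M N : Matrix (Fin 2) (Fin 2) ℝ) :
    matCone (M * N) = M.mulVec '' matCone N := by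
  ext x
  constructor
  · rintro ⟨v, hv, rfl⟩
    exact ⟨N.mulVec v, ⟨v, hv, rfl⟩, (Matrix.mulVec_mulVec v M N)⟩
  · rintro ⟨y, ⟨v, hv, rfl⟩, rfl⟩
    exact ⟨v, hv, (Matrix.mulVec_mulVec v M N)⟩

lemma zero_mem_matCone (M : Matrix (Fin 2) (Fin 2) ℝ) : 0 ∈ matCone M :=
  ⟨0, fun _ => le_refl 0, (Matrix.mulVec_zero M).symm⟩

lemma smul_mem_matCone {M : Matrix (Fin 2) (Fin 2) ℝ} {c : ℝ} (hc : 0 ≤ c)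
    {x : Fin 2 → ℝ} (hx : x ∈ matCone M) : c • x ∈ matCone M := by
  obtain ⟨v, hv, rfl⟩ := hx
  exact ⟨c • v, fun i => mul_nonneg hc (hv i), (Matrix.mulVec_smul M c v).symm⟩

lemma image_eq_singleton_zero {L : Matrix (Fin 2) (Fin 2) ℝ}
    (hL : Function.Injective L.mulVec) {S : Set (Fin 2 → ℝ)} (h0 : 0 ∈ S) :
    L.mulVec '' S = {0} ↔ S = {0} := by
  constructor
  · intro h
    apply subset_antisymm
    · intro x hx
      have : L.mulVec x ∈ L.mulVec '' S := ⟨x, hx, rfl⟩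
      rw [h, Set.mem_singleton_iff] at this
      have : L.mulVec x = L.mulVec 0 := by rw [this, Matrix.mulVec_zero]
      simpa using hL this
    · intro x hx
      rw [Set.mem_singleton_iff] at hx
      rwa [hx]
  · intro h
    rw [h, Set.image_singleton, Matrix.mulVec_zero]

lemma inter_image_ne {L : Matrix (Fin 2) (Fin 2) ℝ} (hL : Function.Injective L.mulVec)
    {S T : Set (Fin 2 → ℝ)} (hS : 0 ∈ S) (hT : 0 ∈ T) :
    (L.mulVec '' S) ∩ (L.mulVec '' T) ≠ {0} ↔ S ∩ T ≠ {0} := by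
  rw [← Set.image_inter hL]
  exact not_congr (image_eq_singleton_zero hL ⟨hS, hT⟩)

lemma mem_cone_e1 (u : List Bool) :
    ![(0:ℝ), 1] ∈ matCone (wordProd u) ↔ ∀ b ∈ u, b = true := by
  induction u with
  | nil =>
    simp only [List.not_mem_nil, false_implies, implies_true, iff_true, wordProd_nil]
    exact ⟨![0, 1], by norm_num [Fin.forall_fin_two], (Matrix.one_mulVec _).symm⟩
  | cons a u ih =>
    rw [wordProd_cons, matCone_mul]
    cases a
    · simp only [letterMat]
      constructor
      · rintro ⟨y, hy, hxy⟩
        exfalso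
        beta_reduce at hxy
        rw [O_mulVec] at hxy
        have h0 : y 0 + y 1 = 0 := by
          have := congrFun hxy 0; simpa using this
        have h1 : y 1 = 1 := by
          have := congrFun hxy 1; simpa using this
        have hy0 := matCone_nonneg hy 0
        have hy1 := matCone_nonneg hy 1
        linarith
      · intro h
        exact absurd (h false (by simp)) (by simp)
    · simp only [letterMat]
      have key : ∀ y : Fin 2 → ℝ,
          (!![1, 0; 1, 1] : Matrix (Fin 2) (Fin 2) ℝ).mulVec y = ![(0:ℝ), 1] ↔
            y = ![(0:ℝ), 1] := by
        intro y
        rw [I_mulVec]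
        constructor
        · intro h
          have h0 : y 0 = 0 := by have := congrFun h 0; simpa using this
          have h1 : y 0 + y 1 = 1 := by have := congrFun h 1; simpa using this
          funext i
          fin_cases i <;> simp [h0] <;> linarith
        · rintro rfl
          funext i; fin_cases i <;> simp
      constructor
      · rintro ⟨y, hy, hxy⟩
        beta_reduce at hxy
        rw [key] at hxy
        rw [← hxy] at ih
        intro b hb
        rcases List.mem_cons.mp hb with rfl | hb
        · rfl
        · exact (ih.mp hy) b hb
      · intro h
        refine ⟨![(0:ℝ), 1], ih.mpr fun b hb => h b (List.mem_cons_of_mem _ hb), ?_⟩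
        exact (key _).mpr rfl

lemma mem_cone_e0 (u : List Bool) :
    ![(1:ℝ), 0] ∈ matCone (wordProd u) ↔ ∀ b ∈ u, b = false := by
  induction u with
  | nil =>
    simp only [List.not_mem_nil, false_implies, implies_true, iff_true, wordProd_nil]
    exact ⟨![1, 0], by norm_num [Fin.forall_fin_two], (Matrix.one_mulVec _).symm⟩
  | cons a u ih =>
    rw [wordProd_cons, matCone_mul]
    cases a
    · simp only [letterMat]
      have key : ∀ y : Fin 2 → ℝ,
          (!![1, 1; 0, 1] : Matrix (Fin 2) (Fin 2) ℝ).mulVec y = ![(1:ℝ), 0] ↔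
            y = ![(1:ℝ), 0] := by
        intro y
        rw [O_mulVec]
        constructor
        · intro h
          have h0 : y 0 + y 1 = 1 := by have := congrFun h 0; simpa using this
          have h1 : y 1 = 0 := by have := congrFun h 1; simpa using this
          funext i
          fin_cases i <;> simp [h1] <;> linarith
        · rintro rfl
          funext i; fin_cases i <;> simp
      constructor
      · rintro ⟨y, hy, hxy⟩
        beta_reduce at hxy
        rw [key] at hxy
        rw [← hxy] at ih
        intro b hb
        rcases List.mem_cons.mp hb with rfl | hb
        · rfl
        · exact (ih.mp hy) b hb
      · intro h
        refine ⟨![(1:ℝ), 0], ih.mpr fun b hb => h b (List.mem_cons_of_mem _ hb), ?_⟩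
        exact (key _).mpr rfl
    · simp only [letterMat]
      constructor
      · rintro ⟨y, hy, hxy⟩
        exfalso
        beta_reduce at hxy
        rw [I_mulVec] at hxy
        have h0 : y 0 = 1 := by have := congrFun hxy 0; simpa using this
        have h1 : y 0 + y 1 = 0 := by have := congrFun hxy 1; simpa using this
        have hy1 := matCone_nonneg hy 1
        linarith
      · intro h
        exact absurd (h true (by simp)) (by simp)

lemma cones_diff_head (u v : List Bool) :
    matCone (wordProd (false :: u)) ∩ matCone (wordProd (true :: v)) ≠ {0} ↔
      (∀ b ∈ u, b = true) ∧ (∀ b ∈ v, b = false) := by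
  have hO : wordProd (false :: u) = !![1, 1; 0, 1] * wordProd u := wordProd_cons _ _
  have hI : wordProd (true :: v) = !![1, 0; 1, 1] * wordProd v := wordProd_cons _ _
  have h11O : ∀ y : Fin 2 → ℝ,
      (!![1, 1; 0, 1] : Matrix (Fin 2) (Fin 2) ℝ).mulVec y = ![(1:ℝ), 1] ↔
        y = ![(0:ℝ), 1] := by
    intro y
    rw [O_mulVec]
    constructor
    · intro h
      have h0 : y 0 + y 1 = 1 := by have := congrFun h 0; simpa using this
      have h1 : y 1 = 1 := by have := congrFun h 1; simpa using this
      funext i; fin_cases i <;> simp [h1] <;> linarith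
    · rintro rfl; funext i; fin_cases i <;> norm_num
  have h11I : ∀ y : Fin 2 → ℝ,
      (!![1, 0; 1, 1] : Matrix (Fin 2) (Fin 2) ℝ).mulVec y = ![(1:ℝ), 1] ↔
        y = ![(1:ℝ), 0] := by
    intro y
    rw [I_mulVec]
    constructor
    · intro h
      have h0 : y 0 = 1 := by have := congrFun h 0; simpa using this
      have h1 : y 0 + y 1 = 1 := by have := congrFun h 1; simpa using this
      funext i; fin_cases i <;> simp [h0] <;> linarith
    · rintro rfl; funext i; fin_cases i <;> norm_num
  constructor
  · intro h
    have hsub : ¬ (matCone (wordProd (false :: u)) ∩ matCone (wordProd (true :: v)) ⊆ {0}) := by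
      intro hsub
      exact h (subset_antisymm hsub (by
        intro x hx
        rw [Set.mem_singleton_iff] at hx
        rw [hx]
        exact ⟨zero_mem_matCone _, zero_mem_matCone _⟩))
    obtain ⟨x, ⟨hxO, hxI⟩, hx0⟩ := Set.not_subset.mp hsub
    rw [Set.mem_singleton_iff] at hx0
    -- from the O side: x 1 ≤ x 0 and 0 ≤ x 1
    obtain ⟨yO, hyO, hxyO⟩ := (matCone_mul _ _ ▸ (hO ▸ hxO) : x ∈ _ '' matCone (wordProd u))
    obtain ⟨yI, hyI, hxyI⟩ := (matCone_mul _ _ ▸ (hI ▸ hxI) : x ∈ _ '' matCone (wordProd v))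
    rw [O_mulVec] at hxyO
    rw [I_mulVec] at hxyI
    have hO0 : x 0 = yO 0 + yO 1 := by rw [← hxyO]; simp
    have hO1 : x 1 = yO 1 := by rw [← hxyO]; simp
    have hI0 : x 0 = yI 0 := by rw [← hxyI]; simp
    have hI1 : x 1 = yI 0 + yI 1 := by rw [← hxyI]; simp
    have hyO0 := matCone_nonneg hyO 0
    have hyO1 := matCone_nonneg hyO 1
    have hyI0 := matCone_nonneg hyI 0
    have hyI1 := matCone_nonneg hyI 1
    have heq : x 0 = x 1 := by linarith
    have ht : 0 < x 0 := by
      rcases lt_or_eq_of_le (by linarith : (0:ℝ) ≤ x 0) with h' | h'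
      · exact h'
      · exfalso
        apply hx0
        funext i; fin_cases i <;> simp <;> linarith
    have hone : ![(1:ℝ), 1] = (x 0)⁻¹ • x := by
      funext i
      fin_cases i <;> simp [Pi.smul_apply] <;>
        field_simp <;> linarith
    have h1O : ![(1:ℝ), 1] ∈ matCone (wordProd (false :: u)) := by
      rw [hone]; exact smul_mem_matCone (by positivity) hxO
    have h1I : ![(1:ℝ), 1] ∈ matCone (wordProd (true :: v)) := by
      rw [hone]; exact smul_mem_matCone (by positivity) hxI
    constructor
    · rw [← mem_cone_e1]
      rw [hO, matCone_mul] at h1O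
      obtain ⟨y, hy, hxy⟩ := h1O
      rw [h11O] at hxy
      rwa [← hxy]
    · rw [← mem_cone_e0]
      rw [hI, matCone_mul] at h1I
      obtain ⟨y, hy, hxy⟩ := h1I
      rw [h11I] at hxy
      rwa [← hxy]
  · rintro ⟨h1, h2⟩
    intro heq
    have m1 : ![(1:ℝ), 1] ∈ matCone (wordProd (false :: u)) := by
      rw [hO, matCone_mul]
      exact ⟨![(0:ℝ), 1], (mem_cone_e1 u).mpr h1, (h11O _).mpr rfl⟩
    have m2 : ![(1:ℝ), 1] ∈ matCone (wordProd (true :: v)) := by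
      rw [hI, matCone_mul]
      exact ⟨![(1:ℝ), 0], (mem_cone_e0 v).mpr h2, (h11I _).mpr rfl⟩
    have : ![(1:ℝ), 1] ∈ ({0} : Set (Fin 2 → ℝ)) := heq ▸ ⟨m1, m2⟩
    rw [Set.mem_singleton_iff] at this
    have := congrFun this 0
    norm_num at this

def Adj (u v : List Bool) : Prop :=
  ∃ (w : List Bool) (k : ℕ),
    (u = w ++ false :: List.replicate k true ∧
     v = w ++ true :: List.replicate k false) ∨
    (u = w ++ true :: List.replicate k false ∧
     v = w ++ false :: List.replicate k true)

lemma adj_cons (a : Bool) (u v : List Bool) : Adj (a :: u) (a :: v) ↔ Adj u v := by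
  constructor
  · rintro ⟨w, k, (⟨h1, h2⟩ | ⟨h1, h2⟩)⟩
    · cases w with
      | nil =>
        simp only [List.nil_append, List.cons.injEq] at h1 h2
        exact absurd (h1.1.symm.trans h2.1) (by simp)
      | cons c w =>
        simp only [List.cons_append, List.cons.injEq] at h1 h2
        exact ⟨w, k, Or.inl ⟨h1.2, h2.2⟩⟩
    · cases w with
      | nil =>
        simp only [List.nil_append, List.cons.injEq] at h1 h2
        exact absurd (h1.1.symm.trans h2.1) (by simp)
      | cons c w =>
        simp only [List.cons_append, List.cons.injEq] at h1 h2
        exact ⟨w, k, Or.inr ⟨h1.2, h2.2⟩⟩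
  · rintro ⟨w, k, (⟨h1, h2⟩ | ⟨h1, h2⟩)⟩
    · exact ⟨a :: w, k, Or.inl ⟨by rw [h1]; rfl, by rw [h2]; rfl⟩⟩
    · exact ⟨a :: w, k, Or.inr ⟨by rw [h1]; rfl, by rw [h2]; rfl⟩⟩

lemma adj_ft (u v : List Bool) :
    Adj (false :: u) (true :: v) ↔
      ∃ k, u = List.replicate k true ∧ v = List.replicate k false := by
  constructor
  · rintro ⟨w, k, (⟨h1, h2⟩ | ⟨h1, h2⟩)⟩
    · cases w with
      | nil =>
        simp only [List.nil_append, List.cons.injEq] at h1 h2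
        exact ⟨k, h1.2, h2.2⟩
      | cons c w =>
        simp only [List.cons_append, List.cons.injEq] at h1 h2
        exact absurd (h1.1.trans h2.1.symm) (by simp)
    · cases w with
      | nil =>
        simp only [List.nil_append, List.cons.injEq] at h1 h2
        exact absurd h1.1 (by simp)
      | cons c w =>
        simp only [List.cons_append, List.cons.injEq] at h1 h2
        exact absurd (h1.1.trans h2.1.symm) (by simp)
  · rintro ⟨k, h1, h2⟩
    exact ⟨[], k, Or.inl ⟨by rw [h1]; rfl, by rw [h2]; rfl⟩⟩

lemma adj_comm (u v : List Bool) : Adj u v ↔ Adj v u := by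
  constructor <;> rintro ⟨w, k, (⟨h1, h2⟩ | ⟨h1, h2⟩)⟩
  · exact ⟨w, k, Or.inr ⟨h2, h1⟩⟩
  · exact ⟨w, k, Or.inl ⟨h2, h1⟩⟩
  · exact ⟨w, k, Or.inr ⟨h2, h1⟩⟩
  · exact ⟨w, k, Or.inl ⟨h2, h1⟩⟩

lemma all_eq_iff_replicate {l : List Bool} {b : Bool} :
    (∀ x ∈ l, x = b) ↔ l = List.replicate l.length b := by
  rw [List.eq_replicate_iff]
  simp

lemma main_lemma (u : List Bool) : ∀ v : List Bool, u.length = v.length →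
    (matCone (wordProd u) ∩ matCone (wordProd v) ≠ {0} ↔ u = v ∨ Adj u v) := by
  induction u with
  | nil =>
    intro v hlen
    have : v = [] := List.eq_nil_of_length_eq_zero hlen.symm
    subst this
    constructor
    · intro _; exact Or.inl rfl
    · intro _ heq
      have hmem : ![(1:ℝ), 1] ∈ matCone (wordProd []) ∩ matCone (wordProd []) := by
        rw [Set.inter_self]
        exact ⟨![1, 1], by norm_num [Fin.forall_fin_two],
          by rw [wordProd_nil, Matrix.one_mulVec]⟩
      rw [heq, Set.mem_singleton_iff] at hmem
      have := congrFun hmem 0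
      norm_num at this
  | cons a u ih =>
    intro v hlen
    cases v with
    | nil => simp at hlen
    | cons b v =>
      have hlen' : u.length = v.length := by simpa using hlen
      cases a <;> cases b
      · -- false, false
        rw [wordProd_cons, wordProd_cons, matCone_mul, matCone_mul,
          inter_image_ne (letter_inj false) (zero_mem_matCone _) (zero_mem_matCone _),
          ih v hlen', adj_cons]
        simp
      · -- false, true
        rw [cones_diff_head, adj_ft]
        constructor
        · rintro ⟨h1, h2⟩
          refine Or.inr ⟨u.length, all_eq_iff_replicate.mp h1, ?_⟩
          rw [hlen']
          exact all_eq_iff_replicate.mp h2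
        · rintro (h | ⟨k, h1, h2⟩)
          · exact absurd h (by simp)
          · subst h1; subst h2
            constructor <;> intro x hx <;> exact (List.eq_of_mem_replicate hx)
      · -- true, false
        rw [Set.inter_comm, cones_diff_head, adj_comm, adj_ft]
        constructor
        · rintro ⟨h1, h2⟩
          refine Or.inr ⟨v.length, all_eq_iff_replicate.mp h1, ?_⟩
          rw [← hlen']
          exact all_eq_iff_replicate.mp h2
        · rintro (h | ⟨k, h1, h2⟩)
          · exact absurd h (by simp)
          · subst h1; subst h2
            constructor <;> intro x hx <;> exact (List.eq_of_mem_replicate hx)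
      · -- true, true
        rw [wordProd_cons, wordProd_cons, matCone_mul, matCone_mul,
          inter_image_ne (letter_inj true) (zero_mem_matCone _) (zero_mem_matCone _),
          ih v hlen', adj_cons]
        simp

/-- Two words of the same length over `{O, I}` have cones meeting outside `{0}`
iff they are equal, or they share a prefix and, after the first differing letter,
the word with `O` continues with all `I`'s while the word with `I` continues with
all `O`'s. -/
theorem cones_intersect_iff (n : ℕ) (u v : List Bool)
    (hu : u.length = n) (hv : v.length = n) :
    matCone (wordProd u) ∩ matCone (wordProd v) ≠ {0} ↔
      u = v ∨
      ∃ (w : List Bool) (k : ℕ),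
        (u = w ++ false :: List.replicate k true ∧
         v = w ++ true :: List.replicate k false) ∨
        (u = w ++ true :: List.replicate k false ∧
         v = w ++ false :: List.replicate k true) := by
  exact main_lemma u v (hu.trans hv.symm)
end

section
/- Let A be an invertible d×d matrix with nonnegative entries mapping the open positive orthant into itself, and let L_A : Δ → Δ be defined by L_A(y) = Ay/‖Ay‖₁ on the standard simplex Δ = {y ∈ ℝ₊^d : ‖y‖₁ = 1}. Then the Jacobian determinant of L_A at y equals |det A| / ‖Ay‖₁^d. -/
open MeasureTheory Matrix
open scoped ENNReal NNReal
namespace VeechAux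
noncomputable section
variable (n : ℕ)

def sig : (Fin (n+1) → ℝ) →ₗ[ℝ] ℝ where
  toFun y := ∑ i, y i
  map_add' x y := by simp [Finset.sum_add_distrib]
  map_smul' c x := by simp [Finset.mul_sum]

def lphi : (Fin n → ℝ) →ₗ[ℝ] (Fin (n+1) → ℝ) where
  toFun x := Fin.snoc x (-(∑ i, x i))
  map_add' x y := by
    funext i
    refine Fin.lastCases ?_ (fun i => ?_) i
    · simp [Finset.sum_add_distrib]; ring
    · simp
  map_smul' c x := by
    funext i
    refine Fin.lastCases ?_ (fun i => ?_) i
    · simp [Finset.mul_sum]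
    · simp

def proj : (Fin (n+1) → ℝ) →ₗ[ℝ] (Fin n → ℝ) := LinearMap.funLeft ℝ ℝ Fin.castSucc

def eU : Fin (n+1) → ℝ := Pi.single (Fin.last n) 1

@[simp] lemma proj_apply (y : Fin (n+1) → ℝ) (i : Fin n) : proj n y i = y i.castSucc := rfl

@[simp] lemma lphi_castSucc (x : Fin n → ℝ) (i : Fin n) : lphi n x i.castSucc = x i := by
  simp [lphi]

@[simp] lemma lphi_last (x : Fin n → ℝ) : lphi n x (Fin.last n) = -(∑ i, x i) := by
  simp [lphi]

@[simp] lemma proj_lphi (x : Fin n → ℝ) : proj n (lphi n x) = x := by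
  funext i; simp

@[simp] lemma sig_lphi (x : Fin n → ℝ) : sig n (lphi n x) = 0 := by
  simp [sig, Fin.sum_univ_castSucc]

lemma sig_apply (y : Fin (n+1) → ℝ) : sig n y = ∑ i, y i := rfl

lemma lphi_proj {y : Fin (n+1) → ℝ} (hy : sig n y = 0) : lphi n (proj n y) = y := by
  funext i
  refine Fin.lastCases ?_ (fun i => ?_) i
  · simp only [lphi_last, proj_apply]
    have := hy
    simp only [sig, LinearMap.coe_mk, AddHom.coe_mk, Fin.sum_univ_castSucc] at this
    linarith
  · simp

@[simp] lemma sig_eU : sig n (eU n) = 1 := by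
  simp [sig, eU, Pi.single_apply]

@[simp] lemma proj_eU : proj n (eU n) = 0 := by
  funext i
  simp [eU, Pi.single_apply, (Fin.castSucc_lt_last i).ne]

def F1 : (Fin (n+1) → ℝ) →ₗ[ℝ] (Fin (n+1) → ℝ) where
  toFun y := Fin.snoc (proj n y) (sig n y)
  map_add' x y := by
    funext i
    refine Fin.lastCases ?_ (fun i => ?_) i <;> simp
  map_smul' c x := by
    funext i
    refine Fin.lastCases ?_ (fun i => ?_) i
    · simpa using (sig n).map_smul c x
    · simp

def G1 : (Fin (n+1) → ℝ) →ₗ[ℝ] (Fin (n+1) → ℝ) :=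
  lphi n ∘ₗ proj n + (LinearMap.proj (Fin.last n)).smulRight (eU n)

@[simp] lemma F1_castSucc (y : Fin (n+1) → ℝ) (i : Fin n) :
    F1 n y i.castSucc = y i.castSucc := by simp [F1]

@[simp] lemma F1_last (y : Fin (n+1) → ℝ) : F1 n y (Fin.last n) = sig n y := by simp [F1]

lemma G1_apply (c : Fin (n+1) → ℝ) : G1 n c = lphi n (proj n c) + c (Fin.last n) • eU n := rfl

lemma F1_G1 (c : Fin (n+1) → ℝ) : F1 n (G1 n c) = c := by
  funext i
  refine Fin.lastCases ?_ (fun i => ?_) i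
  · rw [F1_last, G1_apply, LinearMap.map_add, LinearMap.map_smul, sig_lphi, sig_eU]
    simp
  · rw [F1_castSucc, G1_apply]
    simp [eU, Pi.single_apply, (Fin.castSucc_lt_last i).ne]

lemma G1_F1 (y : Fin (n+1) → ℝ) : G1 n (F1 n y) = y := by
  have h1 : proj n (F1 n y) = proj n y := by funext i; simp
  rw [G1_apply, h1, F1_last]
  funext i
  refine Fin.lastCases ?_ (fun i => ?_) i
  · simp only [Pi.add_apply, lphi_last, proj_apply, Pi.smul_apply, eU,
      Pi.single_eq_same, smul_eq_mul, mul_one]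
    have : sig n y = ∑ i : Fin n, y i.castSucc + y (Fin.last n) := by
      simp [sig, Fin.sum_univ_castSucc]
    linarith
  · simp [eU, Pi.single_apply, (Fin.castSucc_lt_last i).ne]

def E1 : (Fin (n+1) → ℝ) ≃ₗ[ℝ] (Fin (n+1) → ℝ) :=
  LinearEquiv.ofLinear (F1 n) (G1 n)
    (LinearMap.ext fun c => by simpa using F1_G1 n c)
    (LinearMap.ext fun y => by simpa using G1_F1 n y)

@[simp] lemma E1_apply (y : Fin (n+1) → ℝ) : E1 n y = F1 n y := rfl

lemma E1_symm_single_castSucc (j : Fin n) :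
    (E1 n).symm (Pi.single j.castSucc 1) = lphi n (Pi.single j 1) := by
  rw [LinearEquiv.symm_apply_eq]
  funext i
  refine Fin.lastCases ?_ (fun i => ?_) i
  · simp [Pi.single_apply, (Fin.castSucc_lt_last j).ne]
  · simp [Pi.single_apply, Fin.castSucc_inj]

lemma E1_symm_single_last :
    (E1 n).symm (Pi.single (Fin.last n) 1) = eU n := by
  rw [LinearEquiv.symm_apply_eq]
  funext i
  refine Fin.lastCases ?_ (fun i => ?_) i
  · simp
  · simp [eU, Pi.single_apply, (Fin.castSucc_lt_last i).ne]

lemma single_eq_ite (m : ℕ) (j : Fin m) :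
    (fun i => if i = j then (1:ℝ) else 0) = Pi.single j 1 := by
  funext i; simp [Pi.single_apply]

lemma det_eq_det_compress (C : (Fin (n+1) → ℝ) →ₗ[ℝ] (Fin (n+1) → ℝ))
    (h0 : ∀ x : Fin n → ℝ, sig n (C (lphi n x)) = 0)
    (h1 : sig n (C (eU n)) = 1) :
    LinearMap.det C = LinearMap.det (proj n ∘ₗ C ∘ₗ lphi n) := by
  classical
  have hconj : LinearMap.det C
      = LinearMap.det (((E1 n : (Fin (n+1) → ℝ) →ₗ[ℝ] (Fin (n+1) → ℝ))) ∘ₗ C ∘ₗ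
          ((E1 n).symm : (Fin (n+1) → ℝ) →ₗ[ℝ] (Fin (n+1) → ℝ))) :=
    (LinearMap.det_conj C (E1 n)).symm
  rw [hconj, ← LinearMap.det_toMatrix' , ← LinearMap.det_toMatrix' (proj n ∘ₗ C ∘ₗ lphi n)]
  set K := ((E1 n : (Fin (n+1) → ℝ) →ₗ[ℝ] (Fin (n+1) → ℝ))) ∘ₗ C ∘ₗ
      ((E1 n).symm : (Fin (n+1) → ℝ) →ₗ[ℝ] (Fin (n+1) → ℝ)) with hK
  set N := LinearMap.toMatrix' K with hN
  have hNapp : ∀ i j, N i j = K (Pi.single j 1) i := by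
    intro i j
    rw [hN, LinearMap.toMatrix'_apply]
  have hKc : ∀ j : Fin n, K (Pi.single j.castSucc 1) = F1 n (C (lphi n (Pi.single j 1))) := by
    intro j
    simp only [hK, LinearMap.comp_apply, LinearEquiv.coe_coe, E1_symm_single_castSucc, E1_apply]
  have hKl : K (Pi.single (Fin.last n) 1) = F1 n (C (eU n)) := by
    simp only [hK, LinearMap.comp_apply, LinearEquiv.coe_coe, E1_symm_single_last, E1_apply]
  rw [Matrix.det_succ_row N (Fin.last n)]
  rw [Finset.sum_eq_single (Fin.last n)]
  · have hdiag : N (Fin.last n) (Fin.last n) = 1 := by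
      rw [hNapp, hKl]; rw [F1_last]; exact h1
    have hsub : N.submatrix (Fin.last n).succAbove (Fin.last n).succAbove
        = LinearMap.toMatrix' (proj n ∘ₗ C ∘ₗ lphi n) := by
      ext i j
      simp only [Matrix.submatrix_apply, Fin.succAbove_last]
      rw [hNapp, hKc,
        LinearMap.toMatrix'_apply]
      simp only [F1_castSucc]
      simp [LinearMap.comp_apply]
    rw [hdiag, hsub]
    have : (-1 : ℝ) ^ ((Fin.last n : ℕ) + (Fin.last n : ℕ)) = 1 := by
      rw [Fin.val_last]
      exact Even.neg_one_pow ⟨n, rfl⟩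
    rw [this]; ring
  · intro j _ hj
    obtain ⟨j', rfl⟩ : ∃ j' : Fin n, j = j'.castSucc := by
      rcases Fin.eq_castSucc_or_eq_last j with h | h
      · exact h
      · exact absurd h hj
    have : N (Fin.last n) j'.castSucc = 0 := by
      rw [hNapp, hKc, F1_last]; exact h0 _
    rw [this]; ring
  · intro h; exact absurd (Finset.mem_univ _) h


variable {n : ℕ}

/-- The extended linear map whose compression to the hyperplane is the derivative of the
projective action. -/
def Chat (n : ℕ) (A : Matrix (Fin (n+1)) (Fin (n+1)) ℝ) (y : Fin (n+1) → ℝ) (t : ℝ) :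
    (Fin (n+1) → ℝ) →ₗ[ℝ] (Fin (n+1) → ℝ) :=
  t⁻¹ • (A.mulVecLin + (sig n - t⁻¹ • (sig n ∘ₗ A.mulVecLin)).smulRight (A.mulVec y))

lemma Chat_apply (A : Matrix (Fin (n+1)) (Fin (n+1)) ℝ) (y : Fin (n+1) → ℝ) (t : ℝ)
    (v : Fin (n+1) → ℝ) :
    Chat n A y t v
      = t⁻¹ • (A.mulVec v + (sig n v - t⁻¹ * sig n (A.mulVec v)) • A.mulVec y) := by
  simp [Chat, LinearMap.smulRight_apply, sub_smul, smul_smul]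

lemma sig_Chat (A : Matrix (Fin (n+1)) (Fin (n+1)) ℝ) (y : Fin (n+1) → ℝ) (t : ℝ)
    (ht : sig n (A.mulVec y) = t) (ht0 : t ≠ 0) (v : Fin (n+1) → ℝ) :
    sig n (Chat n A y t v) = sig n v := by
  rw [Chat_apply, LinearMap.map_smul, LinearMap.map_add, LinearMap.map_smul, ht]
  simp only [smul_eq_mul]
  linear_combination (sig n v - t⁻¹ * sig n (A *ᵥ v)) * inv_mul_cancel₀ ht0

lemma toMatrix'_Chat (A : Matrix (Fin (n+1)) (Fin (n+1)) ℝ) (y : Fin (n+1) → ℝ) (t : ℝ) :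
    LinearMap.toMatrix' (Chat n A y t)
      = t⁻¹ • (A + Matrix.replicateCol Unit (A.mulVec y)
          * Matrix.replicateRow Unit (fun j => 1 - t⁻¹ * ∑ i, A i j)) := by
  ext i j
  rw [LinearMap.toMatrix'_apply, Chat_apply]
  have h1 : A.mulVec (Pi.single j 1) = fun i => A i j := by
    funext i
    simp [Matrix.mulVec_single]
  have h2 : sig n (Pi.single j (1:ℝ)) = 1 := by
    simp [sig_apply, Pi.single_apply]
  have h3 : sig n (fun i => A i j) = ∑ i, A i j := rfl
  rw [h1, h2]
  simp only [Matrix.smul_apply, Matrix.add_apply, Matrix.mul_apply, Finset.univ_unique,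
    Finset.sum_singleton, Matrix.replicateCol_apply, Matrix.replicateRow_apply, Pi.smul_apply, Pi.add_apply,
    smul_eq_mul, h3]
  ring

lemma det_Chat (A : Matrix (Fin (n+1)) (Fin (n+1)) ℝ) (hA : IsUnit A.det)
    (y : Fin (n+1) → ℝ) (t : ℝ)
    (hy : sig n y = 1) (ht : sig n (A.mulVec y) = t) (ht0 : t ≠ 0) :
    LinearMap.det (Chat n A y t) = A.det / t^(n+1) := by
  rw [← LinearMap.det_toMatrix' , toMatrix'_Chat, Matrix.det_smul,
    Matrix.det_add_replicateCol_mul_replicateRow hA]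
  have hone : (1 + Matrix.replicateRow Unit (fun j => 1 - t⁻¹ * ∑ i, A i j) * A⁻¹
      * Matrix.replicateCol Unit (A.mulVec y)).det = 1 := by
    rw [Matrix.det_unique]
    have hrow : Matrix.replicateRow Unit (fun j => 1 - t⁻¹ * ∑ i, A i j) * A⁻¹
        = Matrix.replicateRow Unit ((fun j => 1 - t⁻¹ * ∑ i, A i j) ᵥ* A⁻¹) := by
      rw [Matrix.replicateRow_vecMul]
    rw [hrow]
    rw [Matrix.add_apply, Matrix.replicateRow_mul_replicateCol_apply, Matrix.one_apply_eq]
    have hAu : A⁻¹.mulVec (A.mulVec y) = y := by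
      rw [Matrix.mulVec_mulVec, Matrix.nonsing_inv_mul A hA, Matrix.one_mulVec]
    have hdp : ((fun j => 1 - t⁻¹ * ∑ i, A i j) ᵥ* A⁻¹) ⬝ᵥ (A.mulVec y)
        = (fun j => 1 - t⁻¹ * ∑ i, A i j) ⬝ᵥ y := by
      rw [← Matrix.dotProduct_mulVec, hAu]
    rw [hdp]
    have hsum : (fun j => 1 - t⁻¹ * ∑ i, A i j) ⬝ᵥ y
        = sig n y - t⁻¹ * sig n (A.mulVec y) := by
      simp only [dotProduct, sig_apply, Matrix.mulVec, dotProduct,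
        sub_mul, one_mul, Finset.sum_sub_distrib, Finset.mul_sum]
      congr 1
      rw [Finset.sum_comm]
      congr 1; funext j; ring_nf
      rw [Finset.sum_mul]
      congr 1; funext i; ring
    rw [hsum, hy, ht, inv_mul_cancel₀ ht0, sub_self, add_zero]
  rw [hone, mul_one, Fintype.card_fin, inv_pow, div_eq_inv_mul]


lemma det_compress (A : Matrix (Fin (n+1)) (Fin (n+1)) ℝ) (hA : IsUnit A.det)
    (y : Fin (n+1) → ℝ) (t : ℝ)
    (hy : sig n y = 1) (ht : sig n (A.mulVec y) = t) (ht0 : t ≠ 0) :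
    LinearMap.det (proj n ∘ₗ Chat n A y t ∘ₗ lphi n) = A.det / t^(n+1) := by
  rw [← det_eq_det_compress n _ (fun x => by rw [sig_Chat A y t ht ht0, sig_lphi])
    (by rw [sig_Chat A y t ht ht0, sig_eU])]
  exact det_Chat A hA y t hy ht ht0

/-- affine parametrization of the hyperplane {σ = 1} -/
def phi (n : ℕ) (x : Fin n → ℝ) : Fin (n+1) → ℝ := eU n + lphi n x

@[simp] lemma sig_phi (x : Fin n → ℝ) : sig n (phi n x) = 1 := by
  simp [phi, LinearMap.map_add]

@[simp] lemma proj_phi (x : Fin n → ℝ) : proj n (phi n x) = x := by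
  simp [phi, LinearMap.map_add]

lemma phi_proj {y : Fin (n+1) → ℝ} (hy : sig n y = 1) : phi n (proj n y) = y := by
  have h0 : sig n (y - eU n) = 0 := by rw [LinearMap.map_sub, hy, sig_eU, sub_self]
  have : lphi n (proj n (y - eU n)) = y - eU n := lphi_proj n h0
  rw [LinearMap.map_sub, proj_eU, sub_zero] at this
  rw [phi, this]
  abel

lemma phi_injective : Function.Injective (phi n) := by
  intro a b h
  have := congrArg (proj n) h
  simpa using this

/-- the smooth representative of the projective action in the chart -/
def Gm (n : ℕ) (A : Matrix (Fin (n+1)) (Fin (n+1)) ℝ) (x : Fin n → ℝ) : Fin n → ℝ :=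
  (sig n (A.mulVec (phi n x)))⁻¹ • proj n (A.mulVec (phi n x))

/-- its derivative -/
def Dlin (n : ℕ) (A : Matrix (Fin (n+1)) (Fin (n+1)) ℝ) (x : Fin n → ℝ) :
    (Fin n → ℝ) →ₗ[ℝ] (Fin n → ℝ) :=
  proj n ∘ₗ Chat n A (phi n x) (sig n (A.mulVec (phi n x))) ∘ₗ lphi n

lemma hasFDerivAt_Gm (A : Matrix (Fin (n+1)) (Fin (n+1)) ℝ) (x : Fin n → ℝ)
    (ht0 : sig n (A.mulVec (phi n x)) ≠ 0) :
    HasFDerivAt (Gm n A) (LinearMap.toContinuousLinearMap (Dlin n A x)) x := by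
  classical
  set t := sig n (A.mulVec (phi n x)) with htdef
  set AL : (Fin n → ℝ) →L[ℝ] (Fin (n+1) → ℝ) :=
    LinearMap.toContinuousLinearMap (A.mulVecLin ∘ₗ lphi n) with hAL
  have hALapp : ∀ z, AL z = A.mulVec (lphi n z) := fun z => rfl
  have h_u : HasFDerivAt (fun x => A.mulVec (phi n x)) AL x := by
    have heq : (fun x : Fin n → ℝ => A.mulVec (phi n x))
        = fun x => A.mulVec (eU n) + AL x := by
      funext z
      rw [hALapp, phi, Matrix.mulVec_add]
    rw [heq]
    simpa using (hasFDerivAt_const (A.mulVec (eU n)) x).add AL.hasFDerivAt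
  set sigL : (Fin (n+1) → ℝ) →L[ℝ] ℝ := LinearMap.toContinuousLinearMap (sig n) with hsigL
  set projL : (Fin (n+1) → ℝ) →L[ℝ] (Fin n → ℝ) :=
    LinearMap.toContinuousLinearMap (proj n) with hprojL
  have h_t : HasFDerivAt (fun x => sig n (A.mulVec (phi n x))) (sigL.comp AL) x :=
    sigL.hasFDerivAt.comp x h_u
  have h_tinv : HasFDerivAt (fun x => (sig n (A.mulVec (phi n x)))⁻¹)
      ((-(t⁻¹*t⁻¹)) • (sigL.comp AL)) x := by
    have hinv : HasDerivAt (fun s : ℝ => s⁻¹) (-(t^2)⁻¹) t := hasDerivAt_inv ht0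
    have h2 := hinv.comp_hasFDerivAt x h_t
    rw [show (-(t^2)⁻¹ : ℝ) = -(t⁻¹*t⁻¹) by rw [sq, mul_inv]] at h2
    exact h2
  have h_v : HasFDerivAt (fun x => proj n (A.mulVec (phi n x))) (projL.comp AL) x :=
    projL.hasFDerivAt.comp x h_u
  have h_G := h_tinv.smul h_v
  have hfinal : t⁻¹ • (projL.comp AL)
      + ((-(t⁻¹*t⁻¹)) • (sigL.comp AL)).smulRight (proj n (A.mulVec (phi n x)))
      = LinearMap.toContinuousLinearMap (Dlin n A x) := by
    apply ContinuousLinearMap.ext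
    intro h
    have h1 : (LinearMap.toContinuousLinearMap (Dlin n A x)) h
        = proj n (Chat n A (phi n x) t (lphi n h)) := rfl
    have h2 : (t⁻¹ • (projL.comp AL)
        + ((-(t⁻¹*t⁻¹)) • (sigL.comp AL)).smulRight (proj n (A.mulVec (phi n x)))) h
        = t⁻¹ • proj n (A.mulVec (lphi n h))
          + ((-(t⁻¹*t⁻¹)) * sig n (A.mulVec (lphi n h))) • proj n (A.mulVec (phi n x)) := by
      simp only [ContinuousLinearMap.add_apply, ContinuousLinearMap.coe_smul', Pi.smul_apply,
        ContinuousLinearMap.smulRight_apply, ContinuousLinearMap.coe_comp', Function.comp_apply,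
        LinearMap.coe_toContinuousLinearMap', smul_eq_mul]
      rfl
    rw [h1, h2, Chat_apply, LinearMap.map_smul, LinearMap.map_add, LinearMap.map_smul, sig_lphi,
      smul_add, smul_smul]
    congr 1
    congr 1
    ring
  rw [← hfinal]
  exact h_G


/-- the affine hyperplane -/
def Hset (n : ℕ) : Set (Fin (n+1) → ℝ) := {y | sig n y = 1}

lemma continuous_sig : Continuous (sig n) := (sig n).continuous_of_finiteDimensional
lemma continuous_lphi : Continuous (lphi n) := (lphi n).continuous_of_finiteDimensional
lemma continuous_proj : Continuous (proj n) := (proj n).continuous_of_finiteDimensional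
lemma continuous_phi : Continuous (phi n) := continuous_const.add continuous_lphi

lemma measurableSet_Hset : MeasurableSet (Hset n) :=
  (isClosed_eq continuous_sig continuous_const).measurableSet

/-- the surface measure transported to the chart -/
def rho (n : ℕ) : Measure (Fin n → ℝ) :=
  Measure.map (proj n) ((μH[(n:ℝ)]).restrict (Hset n))

lemma rho_apply {W : Set (Fin n → ℝ)} (hW : MeasurableSet W) :
    rho n W = μH[(n:ℝ)] (phi n '' W) := by
  rw [rho, Measure.map_apply continuous_proj.measurable hW,
    Measure.restrict_apply (continuous_proj.measurable hW)]
  congr 1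
  ext y
  constructor
  · rintro ⟨hy1, hy2⟩
    exact ⟨proj n y, hy1, phi_proj hy2⟩
  · rintro ⟨w, hw, rfl⟩
    exact ⟨by simpa using hw, by simp [Hset]⟩

lemma rho_isAddLeftInvariant : Measure.IsAddLeftInvariant (rho n) := by
  constructor
  intro v
  apply Measure.ext
  intro E hE
  rw [Measure.map_apply (measurable_const_add v) hE]
  have hE' : MeasurableSet ((fun x => v + x) ⁻¹' E) := measurable_const_add v hE
  rw [rho, Measure.map_apply continuous_proj.measurable hE',
    Measure.map_apply continuous_proj.measurable hE,
    Measure.restrict_apply (continuous_proj.measurable hE'),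
    Measure.restrict_apply (continuous_proj.measurable hE)]
  have hset : proj n ⁻¹' ((fun x => v + x) ⁻¹' E) ∩ Hset n
      = (fun y => lphi n v + y) ⁻¹' (proj n ⁻¹' E ∩ Hset n) := by
    ext y
    simp only [Set.mem_inter_iff, Set.mem_preimage, Hset, Set.mem_setOf_eq,
      LinearMap.map_add, sig_lphi, zero_add]
    constructor
    · rintro ⟨h1, h2⟩
      exact ⟨by simpa using h1, h2⟩
    · rintro ⟨h1, h2⟩
      exact ⟨by simpa using h1, h2⟩
  rw [hset]
  have : (fun y => lphi n v + y) ⁻¹' (proj n ⁻¹' E ∩ Hset n)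
      = (IsometryEquiv.constVAdd (lphi n v) : (Fin (n+1) → ℝ) ≃ᵢ (Fin (n+1) → ℝ)) ⁻¹'
        (proj n ⁻¹' E ∩ Hset n) := rfl
  rw [this, IsometryEquiv.hausdorffMeasure_preimage]

lemma lipschitz_phi :
    LipschitzWith (1 * ‖LinearMap.toContinuousLinearMap (lphi n)‖₊) (phi n) := by
  have h1 : LipschitzWith ‖LinearMap.toContinuousLinearMap (lphi n)‖₊ (lphi n) := by
    have := (LinearMap.toContinuousLinearMap (lphi n)).lipschitz
    rwa [LinearMap.coe_toContinuousLinearMap'] at this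
  have h2 : Isometry (fun y : Fin (n+1) → ℝ => eU n + y) := by
    have := isometry_vadd (Fin (n+1) → ℝ) (eU n)
    simpa [vadd_eq_add] using this
  exact h2.lipschitz.comp h1

lemma lipschitz_proj : LipschitzWith 1 (proj n) := by
  apply LipschitzWith.of_dist_le_mul
  intro a b
  rw [NNReal.coe_one, one_mul]
  rcases Nat.eq_zero_or_pos n with hn | hn
  · have : proj n a = proj n b := by
      funext i; exact absurd i.2 (by omega)
    simp [this, dist_nonneg]
  · rw [dist_pi_le_iff dist_nonneg]
    intro i
    exact dist_le_pi_dist a b i.castSucc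

lemma rho_finite_compacts : IsFiniteMeasureOnCompacts (rho n) := by
  constructor
  intro K hK
  rw [rho_apply hK.isClosed.measurableSet]
  have hb := (lipschitz_phi (n := n)).hausdorffMeasure_image_le (Nat.cast_nonneg n) K
  have hvol : μH[(n:ℝ)] K = volume K := by
    rw [show ((n:ℝ)) = ((Fintype.card (Fin n) : ℕ) : ℝ) by simp, hausdorffMeasure_pi_real]
  calc μH[(n:ℝ)] (phi n '' K) ≤ _ := hb
  _ < ⊤ := by
      rw [hvol]
      apply ENNReal.mul_lt_top
      · exact ENNReal.rpow_lt_top_of_nonneg (Nat.cast_nonneg n) ENNReal.coe_ne_top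
      · exact hK.measure_lt_top

lemma rho_eq_smul_volume :
    ∃ c : ℝ≥0∞, rho n = c • (volume : Measure (Fin n → ℝ)) := by
  haveI h1 : Measure.IsAddLeftInvariant (rho n) := rho_isAddLeftInvariant
  haveI h2 : IsFiniteMeasureOnCompacts (rho n) := rho_finite_compacts
  refine ⟨((Measure.addHaarScalarFactor (rho n) volume : NNReal) : ℝ≥0∞), ?_⟩
  conv_lhs => rw [Measure.isAddLeftInvariant_eq_smul (rho n) volume]
  rw [ENNReal.smul_def]

end
end VeechAux

open VeechAux in
/-- Veech's Proposition 5.2: the Jacobian of `L_A(y) = Ay/‖Ay‖₁` on the standard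
simplex `Δ`, with respect to the surface measure `ν` on `Δ`, is
`|det A| / ‖Ay‖₁^d`.  Formulated measure-theoretically: for every measurable
`S ⊆ Δ`, `ν(L_A(S)) = ∫_S |det A| / ‖Ay‖₁^d dν(y)`. -/
theorem jacobian_of_projective_action (d : ℕ) (hd : 0 < d)
    (A : Matrix (Fin d) (Fin d) ℝ) (hA : IsUnit A.det)
    (hApos : ∀ i j, 0 ≤ A i j)
    (hAmap : ∀ y : Fin d → ℝ, (∀ i, 0 < y i) → ∀ i, 0 < A.mulVec y i)
    (S : Set (Fin d → ℝ)) (hS : MeasurableSet S)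
    (hSΔ : S ⊆ {y : Fin d → ℝ | (∀ i, 0 ≤ y i) ∧ ∑ i, |y i| = 1}) :
    μH[(d : ℝ) - 1] ((fun y => (∑ i, |A.mulVec y i|)⁻¹ • A.mulVec y) '' S)
      = ∫⁻ y in S,
          ENNReal.ofReal (|A.det| / (∑ i, |A.mulVec y i|) ^ d) ∂(μH[(d : ℝ) - 1]) := by
  classical
  obtain ⟨n, rfl⟩ : ∃ n, d = n + 1 := ⟨d - 1, (Nat.succ_pred_eq_of_pos hd).symm⟩
  have hexp : ((n + 1 : ℕ) : ℝ) - 1 = (n : ℝ) := by push_cast; ring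
  rw [hexp]
  set L : (Fin (n+1) → ℝ) → (Fin (n+1) → ℝ) :=
    fun y => (∑ i, |A.mulVec y i|)⁻¹ • A.mulVec y with hL
  -- column sums are positive
  have hcol : ∀ j, 0 < ∑ i, A i j := by
    intro j
    rcases (Finset.sum_nonneg fun i _ => hApos i j).lt_or_eq with h | h
    · exact h
    · exfalso
      have hAj : ∀ i, A i j = 0 := by
        intro i
        have := (Finset.sum_eq_zero_iff_of_nonneg (fun i _ => hApos i j)).1 h.symm
        exact this i (Finset.mem_univ i)
      have : A.det = 0 := Matrix.det_eq_zero_of_column_eq_zero j hAj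
      rw [this] at hA
      exact (not_isUnit_zero : ¬ IsUnit (0:ℝ)) hA
  -- basic facts about points of S
  have hyS : ∀ y ∈ S, sig n y = 1 := by
    intro y hy
    have h2 := (hSΔ hy).2
    have h1 := (hSΔ hy).1
    rw [sig_apply, ← h2]
    exact Finset.sum_congr rfl fun i _ => (abs_of_nonneg (h1 i)).symm
  have hAy0 : ∀ y ∈ S, ∀ i, 0 ≤ A.mulVec y i := by
    intro y hy i
    rw [Matrix.mulVec, dotProduct]
    exact Finset.sum_nonneg fun j _ => mul_nonneg (hApos i j) ((hSΔ hy).1 j)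
  have habs : ∀ y ∈ S, (∑ i, |A.mulVec y i|) = sig n (A.mulVec y) := by
    intro y hy
    rw [sig_apply]
    exact Finset.sum_congr rfl fun i _ => abs_of_nonneg (hAy0 y hy i)
  have htpos : ∀ y ∈ S, 0 < sig n (A.mulVec y) := by
    intro y hy
    rw [sig_apply]
    obtain ⟨j, hj⟩ : ∃ j, y j ≠ 0 := by
      by_contra h
      push_neg at h
      have := hyS y hy
      rw [sig_apply] at this
      simp [h] at this
    have hyj : 0 < y j := lt_of_le_of_ne ((hSΔ hy).1 j) (Ne.symm hj)
    have : (0:ℝ) < ∑ j', (∑ i, A i j') * y j' := by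
      apply Finset.sum_pos' (fun j' _ => mul_nonneg (hcol j').le ((hSΔ hy).1 j'))
      exact ⟨j, Finset.mem_univ j, mul_pos (hcol j) hyj⟩
    calc (0:ℝ) < ∑ j', (∑ i, A i j') * y j' := this
    _ = ∑ i, A.mulVec y i := by
        simp only [Matrix.mulVec, dotProduct, Finset.sum_mul]
        rw [Finset.sum_comm]
  -- the chart preimage
  set T : Set (Fin n → ℝ) := phi n ⁻¹' S with hTdef
  have hT : MeasurableSet T := continuous_phi.measurable hS
  have hST : S = phi n '' T := by
    ext y
    constructor
    · intro hy
      exact ⟨proj n y, by simpa [hTdef, Set.mem_preimage, phi_proj (hyS y hy)] using hy,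
        phi_proj (hyS y hy)⟩
    · rintro ⟨x, hx, rfl⟩
      exact hx
  set g : (Fin n → ℝ) → (Fin n → ℝ) := fun x => proj n (L (phi n x)) with hg
  -- g agrees with the smooth model Gm on T
  have hgG : Set.EqOn g (Gm n A) T := by
    intro x hx
    have hxS : phi n x ∈ S := hx
    show proj n (L (phi n x)) = Gm n A x
    rw [hL, Gm]
    simp only
    rw [habs _ hxS, LinearMap.map_smul]
  set f' : (Fin n → ℝ) → (Fin n → ℝ) →L[ℝ] (Fin n → ℝ) :=
    fun x => LinearMap.toContinuousLinearMap (Dlin n A x) with hf'def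
  have hf' : ∀ x ∈ T, HasFDerivWithinAt g (f' x) T x := by
    intro x hx
    have hxS : phi n x ∈ S := hx
    have := (hasFDerivAt_Gm A x (htpos _ hxS).ne').hasFDerivWithinAt (s := T)
    exact this.congr (fun z hz => hgG hz) (hgG hx)
  have hdet : ∀ x ∈ T, (f' x).det = A.det / (sig n (A.mulVec (phi n x)))^(n+1) := by
    intro x hx
    have hxS : phi n x ∈ S := hx
    have h1 : (f' x).det = LinearMap.det (Dlin n A x) := by
      rw [hf'def]
      simp only [ContinuousLinearMap.det, LinearMap.coe_toContinuousLinearMap]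
    rw [h1, Dlin]
    exact det_compress A hA (phi n x) _ (sig_phi x) rfl (htpos _ hxS).ne'
  -- L maps points of S into the hyperplane, and phi ∘ g = L ∘ phi on T
  have hLmem : ∀ y ∈ S, sig n (L y) = 1 := by
    intro y hy
    rw [hL]
    simp only
    rw [habs _ hy, LinearMap.map_smul, smul_eq_mul, inv_mul_cancel₀ (htpos _ hy).ne']
  have hphig : ∀ x ∈ T, phi n (g x) = L (phi n x) := by
    intro x hx
    have hxS : phi n x ∈ S := hx
    rw [hg]
    exact phi_proj (hLmem _ hxS)
  -- injectivity
  have hmulinj : Function.Injective (A.mulVec) :=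
    Matrix.mulVec_injective_iff_isUnit.mpr ((Matrix.isUnit_iff_isUnit_det A).mpr hA)
  have hinj : Set.InjOn g T := by
    intro x hx x' hx' hxx
    have hxS : phi n x ∈ S := hx
    have hxS' : phi n x' ∈ S := hx'
    have hLL : L (phi n x) = L (phi n x') := by
      rw [← hphig x hx, ← hphig x' hx', hxx]
    set y := phi n x
    set y' := phi n x'
    set t := sig n (A.mulVec y)
    set t' := sig n (A.mulVec y')
    have hLy : L y = A.mulVec (t⁻¹ • y) := by
      rw [hL]
      simp only
      rw [habs _ hxS, Matrix.mulVec_smul]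
    have hLy' : L y' = A.mulVec (t'⁻¹ • y') := by
      rw [hL]
      simp only
      rw [habs _ hxS', Matrix.mulVec_smul]
    have hyy : t⁻¹ • y = t'⁻¹ • y' := hmulinj (by rw [← hLy, ← hLy', hLL])
    have hsig2 : t⁻¹ = t'⁻¹ := by
      have := congrArg (sig n) hyy
      rwa [LinearMap.map_smul, LinearMap.map_smul, hyS _ hxS, hyS _ hxS',
        smul_eq_mul, smul_eq_mul, mul_one, mul_one] at this
    have hyy' : y = y' := by
      have ht0 : t⁻¹ ≠ 0 := inv_ne_zero (htpos _ hxS).ne'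
      rw [hsig2] at hyy
      exact smul_right_injective (Fin (n+1) → ℝ) (by rw [← hsig2]; exact ht0) hyy
    exact phi_injective hyy'
  -- image identity
  have himg : L '' S = phi n '' (g '' T) := by
    rw [hST, ← Set.image_comp, ← Set.image_comp]
    exact Set.image_congr fun x hx => (hphig x hx).symm
  have hmeasg : MeasurableSet (g '' T) := measurable_image_of_fderivWithin hT hf' hinj
  obtain ⟨c, hc⟩ := rho_eq_smul_volume (n := n)
  -- left-hand side
  have hLHS : μH[(n:ℝ)] (L '' S) = c • ∫⁻ x in T, ENNReal.ofReal |(f' x).det| ∂volume := by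
    rw [himg, ← rho_apply hmeasg, hc]
    rw [lintegral_abs_det_fderiv_eq_addHaar_image volume hT hf' hinj]
    simp [Measure.smul_apply]
  -- right-hand side
  set I : (Fin (n+1) → ℝ) → ENNReal :=
    fun y => ENNReal.ofReal (|A.det| / (∑ i, |A.mulVec y i|) ^ (n+1)) with hI
  have hImeas : Measurable I := by
    apply ENNReal.measurable_ofReal.comp
    apply Measurable.div measurable_const
    apply Measurable.pow _ measurable_const
    have : Continuous fun y : Fin (n+1) → ℝ => ∑ i, |A.mulVec y i| := by
      apply continuous_finset_sum
      intro i _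
      have : Continuous fun y : Fin (n+1) → ℝ => A.mulVec y i :=
        ((A.mulVecLin).continuous_of_finiteDimensional).comp continuous_id |>.comp continuous_id
          |>.comp continuous_id |>.comp continuous_id |>.comp continuous_id |>.comp continuous_id
          |>.comp continuous_id |>.comp continuous_id |>.comp continuous_id
          |> fun h => (continuous_apply i).comp h
      exact this.abs
    exact this.measurable
  have hRHS : (∫⁻ y in S, I y ∂(μH[(n:ℝ)]))
      = c • ∫⁻ x in T, ENNReal.ofReal |(f' x).det| ∂volume := by
    have hset : proj n ⁻¹' T ∩ Hset n = S := by
      ext y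
      constructor
      · rintro ⟨h1, h2⟩
        have : phi n (proj n y) ∈ S := h1
        rwa [phi_proj h2] at this
      · intro hy
        refine ⟨?_, hyS y hy⟩
        show phi n (proj n y) ∈ S
        rwa [phi_proj (hyS y hy)]
    have step1 : (∫⁻ y in S, I y ∂(μH[(n:ℝ)]))
        = ∫⁻ y in S, I (phi n (proj n y)) ∂(μH[(n:ℝ)]) := by
      apply setLIntegral_congr_fun hS
      exact fun y hy => by rw [phi_proj (hyS y hy)]
    have step2 : (∫⁻ x in T, I (phi n x) ∂(rho n))
        = ∫⁻ y in S, I (phi n (proj n y)) ∂(μH[(n:ℝ)]) := by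
      have hmeas2 : Measurable fun x => I (phi n x) := hImeas.comp continuous_phi.measurable
      rw [rho, setLIntegral_map hT hmeas2 continuous_proj.measurable]
      rw [Measure.restrict_restrict (continuous_proj.measurable hT), hset]
    have step3 : (∫⁻ x in T, I (phi n x) ∂(rho n))
        = c • ∫⁻ x in T, I (phi n x) ∂volume := by
      rw [hc, Measure.restrict_smul, lintegral_smul_measure]
    have step4 : (∫⁻ x in T, I (phi n x) ∂volume)
        = ∫⁻ x in T, ENNReal.ofReal |(f' x).det| ∂volume := by
      apply setLIntegral_congr_fun hT
      intro x hx
      have hxS : phi n x ∈ S := hx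
      rw [hI]
      simp only
      rw [habs _ hxS, hdet x hx, abs_div, abs_of_pos (pow_pos (htpos _ hxS) (n+1))]
    rw [step1, ← step2, step3, step4]
  rw [hLHS, ← hRHS]
end

section
/- Let O = (1 1; 0 1) and I = (1 0; 1 1). Then ⋂_{n∈ℕ} (OI)ⁿ·ℝ₊² = ℝ₊·(φ, 1), where φ = (1+√5)/2 is the golden ratio. -/
open Matrix

/-- `⋂ₙ (OI)ⁿ·ℝ₊² = ℝ₊·(φ,1)` where `φ` is the golden ratio,
`O = [[1,1],[0,1]]`, `I = [[1,0],[1,1]]`. -/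
theorem iInter_OI_pow_cone :
    (⋂ n : ℕ, matCone (((!![1, 1; 0, 1] * !![1, 0; 1, 1]) : Matrix (Fin 2) (Fin 2) ℝ) ^ n))
      = {y : Fin 2 → ℝ | ∃ c : ℝ, 0 ≤ c ∧ y = c • ![(1 + Real.sqrt 5) / 2, 1]} := by
  have h5 : Real.sqrt 5 ^ 2 = 5 := Real.sq_sqrt (by norm_num)
  have h5nn : (0:ℝ) ≤ Real.sqrt 5 := Real.sqrt_nonneg 5
  have h5lb : (2:ℝ) ≤ Real.sqrt 5 := by nlinarith
  have h5ub : Real.sqrt 5 ≤ 3 := by nlinarith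
  set φ : ℝ := (1 + Real.sqrt 5) / 2 with hφdef
  have hφ1 : (1:ℝ) ≤ φ := by rw [hφdef]; linarith
  have hφsq : φ ^ 2 = φ + 1 := by rw [hφdef]; field_simp; nlinarith
  have hM : ((!![1, 1; 0, 1] * !![1, 0; 1, 1]) : Matrix (Fin 2) (Fin 2) ℝ)
      = !![2, 1; 1, 1] := by
    norm_num [Matrix.mul_fin_two]
  rw [hM]
  set M : Matrix (Fin 2) (Fin 2) ℝ := !![2, 1; 1, 1] with hMdef
  have hstep : ∀ v : Fin 2 → ℝ, M.mulVec v = ![2 * v 0 + v 1, v 0 + v 1] := by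
    intro v
    funext i
    fin_cases i <;>
      simp [hMdef, Matrix.mulVec, dotProduct, Fin.sum_univ_two]
  -- eigen-identity A : contraction along (1, -φ)
  have hA : ∀ (n : ℕ) (v : Fin 2 → ℝ),
      ((M ^ n).mulVec v) 0 - φ * ((M ^ n).mulVec v) 1
        = (2 - φ) ^ n * (v 0 - φ * v 1) := by
    intro n
    induction n with
    | zero => intro v; simp
    | succ n ih =>
        intro v
        rw [pow_succ', ← Matrix.mulVec_mulVec, hstep ((M ^ n).mulVec v)]
        simp only [Matrix.cons_val_zero, Matrix.cons_val_one, Matrix.head_cons]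
        linear_combination (2 - φ) * ih v - ((M ^ n).mulVec v 1) * hφsq
  -- eigen-identity B : expansion along (1, φ-1)
  have hB : ∀ (n : ℕ) (v : Fin 2 → ℝ),
      ((M ^ n).mulVec v) 0 + (φ - 1) * ((M ^ n).mulVec v) 1
        = (φ + 1) ^ n * (v 0 + (φ - 1) * v 1) := by
    intro n
    induction n with
    | zero => intro v; simp
    | succ n ih =>
        intro v
        rw [pow_succ', ← Matrix.mulVec_mulVec, hstep ((M ^ n).mulVec v)]
        simp only [Matrix.cons_val_zero, Matrix.cons_val_one, Matrix.head_cons]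
        linear_combination (φ + 1) * ih v - ((M ^ n).mulVec v 1) * hφsq
  -- eigenvector identity
  have hC : ∀ n : ℕ, (M ^ n).mulVec ![φ, 1] = ((φ + 1) ^ n) • ![φ, 1] := by
    intro n
    induction n with
    | zero => simp
    | succ n ih =>
        rw [pow_succ', ← Matrix.mulVec_mulVec, ih, Matrix.mulVec_smul, hstep]
        funext i
        fin_cases i <;>
          simp [Matrix.cons_val_zero, Matrix.cons_val_one, Matrix.head_cons,
            Matrix.smul_cons, smul_eq_mul]
        · linear_combination -((φ + 1) ^ n) * hφsq
        · ring
  have hpos : ∀ n : ℕ, (0:ℝ) < (φ + 1) ^ n := fun n => pow_pos (by linarith) n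
  ext y
  simp only [Set.mem_iInter, Set.mem_setOf_eq]
  constructor
  · intro hy
    obtain ⟨v0, hv0, hyv0⟩ := hy 0
    have hynn : ∀ i, 0 ≤ y i := by
      intro i
      have : y = v0 := by simpa using hyv0
      rw [this]; exact hv0 i
    have hbound : ∀ n : ℕ, |y 0 - φ * y 1|
        ≤ (2 - φ) ^ n * (φ ^ 2 * (y 0 + (φ - 1) * y 1)) := by
      intro n
      obtain ⟨v, hv, hyv⟩ := hy n
      have hA' : y 0 - φ * y 1 = (2 - φ) ^ n * (v 0 - φ * v 1) := by
        rw [hyv]; exact hA n v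
      have hB' : y 0 + (φ - 1) * y 1 = (φ + 1) ^ n * (v 0 + (φ - 1) * v 1) := by
        rw [hyv]; exact hB n v
      have h2φ : (0:ℝ) ≤ 2 - φ := by rw [hφdef]; linarith
      have hvnn0 := hv 0
      have hvnn1 := hv 1
      have hφ0 : (0:ℝ) ≤ φ := by linarith
      have hp1 : (0:ℝ) ≤ φ * v 0 := mul_nonneg hφ0 hvnn0
      have hp2 : (0:ℝ) ≤ φ * v 1 := mul_nonneg hφ0 hvnn1
      have habs : |v 0 - φ * v 1| ≤ φ ^ 2 * (v 0 + (φ - 1) * v 1) := by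
        rw [abs_le]
        constructor <;> nlinarith [hp1, hp2, hvnn0, hvnn1, hφsq]
      have hnnv : (0:ℝ) ≤ v 0 + (φ - 1) * v 1 :=
        add_nonneg hvnn0 (mul_nonneg (by linarith) hvnn1)
      have h1n : (1:ℝ) ≤ (φ + 1) ^ n := one_le_pow₀ (by linarith)
      have hle : v 0 + (φ - 1) * v 1 ≤ y 0 + (φ - 1) * y 1 := by
        rw [hB']
        exact le_mul_of_one_le_left hnnv h1n
      calc |y 0 - φ * y 1| = (2 - φ) ^ n * |v 0 - φ * v 1| := by
            rw [hA', abs_mul, abs_of_nonneg (pow_nonneg h2φ n)]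
        _ ≤ (2 - φ) ^ n * (φ ^ 2 * (v 0 + (φ - 1) * v 1)) :=
            mul_le_mul_of_nonneg_left habs (pow_nonneg h2φ n)
        _ ≤ (2 - φ) ^ n * (φ ^ 2 * (y 0 + (φ - 1) * y 1)) := by
            have : φ ^ 2 * (v 0 + (φ - 1) * v 1) ≤ φ ^ 2 * (y 0 + (φ - 1) * y 1) :=
              mul_le_mul_of_nonneg_left hle (by positivity)
            exact mul_le_mul_of_nonneg_left this (pow_nonneg h2φ n)
    have htend : Filter.Tendsto
        (fun n : ℕ => (2 - φ) ^ n * (φ ^ 2 * (y 0 + (φ - 1) * y 1)))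
        Filter.atTop (nhds 0) := by
      have h2φ : (0:ℝ) ≤ 2 - φ := by rw [hφdef]; linarith
      have h2φ' : (2:ℝ) - φ < 1 := by rw [hφdef]; linarith
      have hpow : Filter.Tendsto (fun n : ℕ => (2 - φ) ^ n) Filter.atTop (nhds 0) :=
        tendsto_pow_atTop_nhds_zero_of_lt_one h2φ h2φ'
      simpa using hpow.mul_const (φ ^ 2 * (y 0 + (φ - 1) * y 1))
    have hD0 : y 0 - φ * y 1 = 0 := by
      have hle0 : |y 0 - φ * y 1| ≤ 0 := ge_of_tendsto' htend hbound
      exact abs_nonpos_iff.mp hle0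
    refine ⟨y 1, hynn 1, ?_⟩
    funext i
    fin_cases i <;> simp [smul_eq_mul]
    · linarith
  · rintro ⟨c, hc, rfl⟩ n
    refine ⟨(c / (φ + 1) ^ n) • ![φ, 1], ?_, ?_⟩
    · intro i
      have hcdiv : (0:ℝ) ≤ c / (φ + 1) ^ n := div_nonneg hc (le_of_lt (hpos n))
      fin_cases i <;> simp [smul_eq_mul] <;> positivity
    · rw [Matrix.mulVec_smul, hC, smul_smul, div_mul_cancel₀]
      exact ne_of_gt (hpos n)
end

section
/- Let F : [0,1] → [0,1] be defined by F(x) = 2x for x ∈ [0,1/2] and F(x) = (1−x)/x for x ∈ [1/2,1], and let G̃ be the map on ℝ₊² defined piecewise by G̃(v) = m⁻¹v where m = [[1,0],[1,2]] if v ∈ m·ℝ₊² and m = [[1,1],[1,0]] if v ∈ [[1,1],[1,0]]·ℝ₊². Then F ∘ φ = φ ∘ G̃ wherever both sides are defined, where φ(x,y) = x/(x+y). -/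
open Matrix

/-- The map `F : [0,1] → [0,1]`, `F(x) = 2x` on `[0,1/2]` and `(1-x)/x` on `[1/2,1]`. -/
noncomputable def Fmap (x : ℝ) : ℝ := if x ≤ 1 / 2 then 2 * x else (1 - x) / x

/-- Projection `φ(x,y) = x/(x+y)`. -/
noncomputable def phi (v : Fin 2 → ℝ) : ℝ := v 0 / (v 0 + v 1)

lemma inv_mulVec_self (m : Matrix (Fin 2) (Fin 2) ℝ) (hm : IsUnit m.det)
    (w : Fin 2 → ℝ) : m⁻¹.mulVec (m.mulVec w) = w := by
  rw [Matrix.mulVec_mulVec, Matrix.nonsing_inv_mul m hm, Matrix.one_mulVec]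

/-- `F ∘ φ = φ ∘ G̃` wherever defined: on the interior of each of the two cones,
`F(φ(v)) = φ(m⁻¹ v)` for the corresponding matrix `m`. -/
theorem F_semiconjugate_to_matrices_graph (v : Fin 2 → ℝ) :
    ((∃ w : Fin 2 → ℝ, (∀ i, 0 < w i) ∧ v = (!![1, 0; 1, 2] : Matrix (Fin 2) (Fin 2) ℝ).mulVec w) →
      Fmap (phi v) = phi ((!![1, 0; 1, 2] : Matrix (Fin 2) (Fin 2) ℝ)⁻¹.mulVec v)) ∧
    ((∃ w : Fin 2 → ℝ, (∀ i, 0 < w i) ∧ v = (!![1, 1; 1, 0] : Matrix (Fin 2) (Fin 2) ℝ).mulVec w) →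
      Fmap (phi v) = phi ((!![1, 1; 1, 0] : Matrix (Fin 2) (Fin 2) ℝ)⁻¹.mulVec v)) := by
  constructor
  · rintro ⟨w, hw, rfl⟩
    have h0 := hw 0
    have h1 := hw 1
    rw [inv_mulVec_self _ (by simp [Matrix.det_fin_two_of]) w]
    simp only [Fmap, phi, Matrix.mulVec, dotProduct, Fin.sum_univ_two,
      Matrix.of_apply, Matrix.cons_val', Matrix.cons_val_zero, Matrix.cons_val_one,
      Matrix.head_cons, Matrix.empty_val', Matrix.cons_val_fin_one, Matrix.head_fin_const]
    rw [if_pos]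
    · field_simp
      ring
    · rw [div_le_div_iff₀ (by nlinarith) (by norm_num)]
      nlinarith
  · rintro ⟨w, hw, rfl⟩
    have h0 := hw 0
    have h1 := hw 1
    rw [inv_mulVec_self _ (by simp [Matrix.det_fin_two_of]) w]
    simp only [Fmap, phi, Matrix.mulVec, dotProduct, Fin.sum_univ_two,
      Matrix.of_apply, Matrix.cons_val', Matrix.cons_val_zero, Matrix.cons_val_one,
      Matrix.head_cons, Matrix.empty_val', Matrix.cons_val_fin_one, Matrix.head_fin_const]
    rw [if_neg]
    · rw [div_eq_div_iff (by positivity) (by positivity)]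
      field_simp
      ring
    · rw [not_le, div_lt_div_iff₀ (by norm_num) (by nlinarith)]
      nlinarith
end

section
/- The function f(x,y) = 1/((2x+y)(x+y)) on (ℝ₊*)² satisfies the invariance relation f(v) = |det m₁| f(m₁ v) + |det m₂| f(m₂ v) for all v ∈ (ℝ₊*)², where m₁ = [[1,0],[1,2]] and m₂ = [[1,1],[1,0]]. -/
open Matrix

/-- The density `f(x,y) = 1/((2x+y)(x+y))` satisfies the invariance relation
`f(v) = |det m₁| f(m₁ v) + |det m₂| f(m₂ v)` on the open positive quadrant. -/
theorem invariant_density_dim_one_example :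
    let f : (Fin 2 → ℝ) → ℝ := fun v => 1 / ((2 * v 0 + v 1) * (v 0 + v 1))
    let m₁ : Matrix (Fin 2) (Fin 2) ℝ := !![1, 0; 1, 2]
    let m₂ : Matrix (Fin 2) (Fin 2) ℝ := !![1, 1; 1, 0]
    ∀ v : Fin 2 → ℝ, (∀ i, 0 < v i) →
      f v = |m₁.det| * f (m₁.mulVec v) + |m₂.det| * f (m₂.mulVec v) := by
  intro f m₁ m₂ v hv
  have h0 := hv 0
  have h1 := hv 1
  simp only [f, m₁, m₂, det_fin_two_of, mulVec, dotProduct, Fin.sum_univ_two,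
    of_apply, cons_val', cons_val_zero, cons_val_one, head_cons, head_fin_const,
    empty_val', cons_val_fin_one]
  set x := v 0
  set y := v 1
  rw [show |(1:ℝ)*2 - 0*1| = 2 by norm_num, show |(1:ℝ)*0 - 1*1| = 1 by norm_num]
  have hx : (0:ℝ) < x := h0
  have hy : (0:ℝ) < y := h1
  field_simp
  ring
end

section
/- Let m0 = [[0,1,0],[1,0,0],[0,1,1]] and m1 = [[1,1,0],[0,0,1],[0,1,0]]. The function f(x₀,x₁,x₂) = 1/((x₀+x₁+x₂)(x₀+x₁)(x₁+x₂)) on the open positive octant satisfies f(v) = |det m0|·f(m0 v) + |det m1|·f(m1 v) for all v in the open positive octant. -/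
open Matrix

/-- The density `f = 1/((x₀+x₁+x₂)(x₀+x₁)(x₁+x₂))` satisfies the invariance
relation of the Cassaigne algorithm. -/
theorem cassaigne_invariant_density :
    let f : (Fin 3 → ℝ) → ℝ :=
      fun v => 1 / ((v 0 + v 1 + v 2) * (v 0 + v 1) * (v 1 + v 2))
    let m0 : Matrix (Fin 3) (Fin 3) ℝ := !![0, 1, 0; 1, 0, 0; 0, 1, 1]
    let m1 : Matrix (Fin 3) (Fin 3) ℝ := !![1, 1, 0; 0, 0, 1; 0, 1, 0]
    ∀ v : Fin 3 → ℝ, (∀ i, 0 < v i) →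
      f v = |m0.det| * f (m0.mulVec v) + |m1.det| * f (m1.mulVec v) := by
  intro f m0 m1 v hv
  have h0 := hv 0
  have h1 := hv 1
  have h2 := hv 2
  have hd0 : m0.det = -1 := by
    simp [m0, Matrix.det_fin_three, Matrix.vecHead, Matrix.vecTail]
  have hd1 : m1.det = -1 := by
    simp [m1, Matrix.det_fin_three, Matrix.vecHead, Matrix.vecTail]
  have hm0 : m0.mulVec v = ![v 1, v 0, v 1 + v 2] := by
    funext i
    fin_cases i <;>
      simp [m0, Matrix.mulVec, dotProduct, Fin.sum_univ_three]
  have hm1 : m1.mulVec v = ![v 0 + v 1, v 2, v 1] := by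
    funext i
    fin_cases i <;>
      simp [m1, Matrix.mulVec, dotProduct, Fin.sum_univ_three]
  rw [hd0, hd1, hm0, hm1]
  simp only [f, Matrix.cons_val_zero, Matrix.cons_val_one, Matrix.head_cons,
    Matrix.cons_val_two, Matrix.tail_cons, abs_neg, abs_one, one_mul]
  have ha : v 0 + v 1 + v 2 > 0 := by linarith
  have hb : v 0 + v 1 > 0 := by linarith
  have hc : v 1 + v 2 > 0 := by linarith
  have hd : v 0 + 2 * v 1 + v 2 > 0 := by linarith
  field_simp
  ring
end

section
/- The function f(x₀,x₁,x₂) = 2/((x₀+x₁)(x₀+x₂)(x₁+x₂)) satisfies f(v) = Σᵢ |det mᵢ| f(mᵢ v) on the open positive octant, where m0 = [[1,0,0],[0,1,0],[1,1,1]], m1 = [[1,0,0],[1,1,1],[0,0,1]], m2 = [[1,1,1],[0,1,0],[0,0,1]], m3 = [[0,1,1],[1,0,1],[1,1,0]]. -/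
open Matrix

/-- The density `f = 2/((x₀+x₁)(x₀+x₂)(x₁+x₂))` satisfies the invariance
relation of the reverse algorithm: `f(v) = Σᵢ |det mᵢ| f(mᵢ v)`. -/
theorem reverse_algorithm_invariant_density :
    let f : (Fin 3 → ℝ) → ℝ :=
      fun v => 2 / ((v 0 + v 1) * (v 0 + v 2) * (v 1 + v 2))
    let m0 : Matrix (Fin 3) (Fin 3) ℝ := !![1, 0, 0; 0, 1, 0; 1, 1, 1]
    let m1 : Matrix (Fin 3) (Fin 3) ℝ := !![1, 0, 0; 1, 1, 1; 0, 0, 1]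
    let m2 : Matrix (Fin 3) (Fin 3) ℝ := !![1, 1, 1; 0, 1, 0; 0, 0, 1]
    let m3 : Matrix (Fin 3) (Fin 3) ℝ := !![0, 1, 1; 1, 0, 1; 1, 1, 0]
    ∀ v : Fin 3 → ℝ, (∀ i, 0 < v i) →
      f v = |m0.det| * f (m0.mulVec v) + |m1.det| * f (m1.mulVec v)
          + |m2.det| * f (m2.mulVec v) + |m3.det| * f (m3.mulVec v) := by
  intro f m0 m1 m2 m3 v hv
  have h0 := hv 0; have h1 := hv 1; have h2 := hv 2
  simp only [f, m0, m1, m2, m3, det_fin_three, mulVec, dotProduct,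
    Fin.sum_univ_three, of_apply, cons_val', cons_val_zero, cons_val_one,
    head_cons, head_fin_const, empty_val', cons_val_fin_one, cons_val_two, tail_cons]
  norm_num
  have e1 : v 0 + v 1 > 0 := by linarith
  have e2 : v 0 + v 2 > 0 := by linarith
  have e3 : v 1 + v 2 > 0 := by linarith
  field_simp
  ring
end

section
/- For x₀ < x₁ < x₂ all positive, the function f(x₀,x₁,x₂) = 1/((x₀+x₂)·x₁·x₂) is invariant for the Brun algorithm on the ordered cone: extended symmetrically to all orderings (f(x) = 1/((min+max)·med·max) where min, med, max are the ordered coordinates), it satisfies f(v) = Σ |det m| f(m v) summed over the three Brun matrices m which add the second-largest coordinate to the largest in each ordering sector. -/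
open Matrix

/-- The Brun density extended to all orderings:
`f(x) = 1/((min+max)·med·max)` where `min, med, max` are the sorted coordinates. -/
noncomputable def brunDensity (v : Fin 3 → ℝ) : ℝ :=
  let mn := min (v 0) (min (v 1) (v 2))
  let mx := max (v 0) (max (v 1) (v 2))
  let md := v 0 + v 1 + v 2 - mn - mx
  1 / ((mn + mx) * md * mx)

/-- On the sector `0 < x₀ < x₁ < x₂`, where `brunDensity x = 1/((x₀+x₂)x₁x₂)`,
the Brun density satisfies `f(v) = Σ |det m| f(m v)` over the three inverse
branches of the Brun algorithm, each adding the second-largest coordinate to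
the largest one. -/
theorem brun_invariant_density :
    let M2 : Matrix (Fin 3) (Fin 3) ℝ := !![1, 0, 0; 0, 1, 0; 0, 1, 1]
    let M1 : Matrix (Fin 3) (Fin 3) ℝ := !![1, 0, 0; 0, 1, 1; 0, 0, 1]
    let M0 : Matrix (Fin 3) (Fin 3) ℝ := !![1, 0, 1; 0, 1, 0; 0, 0, 1]
    ∀ v : Fin 3 → ℝ, 0 < v 0 → v 0 < v 1 → v 1 < v 2 →
      brunDensity v = 1 / ((v 0 + v 2) * v 1 * v 2) ∧
      brunDensity v
        = |M2.det| * brunDensity (M2.mulVec v)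
        + |M1.det| * brunDensity (M1.mulVec v)
        + |M0.det| * brunDensity (M0.mulVec v) := by
  intro M2 M1 M0 v h0 h01 h12
  have h02 : v 0 < v 2 := h01.trans h12
  have h1 : 0 < v 1 := h0.trans h01
  have h2 : 0 < v 2 := h1.trans h12
  have e2 : M2.mulVec v = ![v 0, v 1, v 1 + v 2] := by
    funext i; fin_cases i <;> simp [M2, mulVec, dotProduct, Fin.sum_univ_three]
  have e1 : M1.mulVec v = ![v 0, v 1 + v 2, v 2] := by
    funext i; fin_cases i <;> simp [M1, mulVec, dotProduct, Fin.sum_univ_three]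
  have e0 : M0.mulVec v = ![v 0 + v 2, v 1, v 2] := by
    funext i; fin_cases i <;> simp [M0, mulVec, dotProduct, Fin.sum_univ_three]
  have d2 : M2.det = 1 := by
    simp [M2, Matrix.det_fin_three, Matrix.vecHead, Matrix.vecTail]
  have d1 : M1.det = 1 := by
    simp [M1, Matrix.det_fin_three, Matrix.vecHead, Matrix.vecTail]
  have d0 : M0.det = 1 := by
    simp [M0, Matrix.det_fin_three, Matrix.vecHead, Matrix.vecTail]
  rw [e2, e1, e0, d2, d1, d0]
  simp only [brunDensity, Matrix.cons_val_zero, Matrix.cons_val_one, Matrix.head_cons,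
    Matrix.cons_val_two, Matrix.tail_cons, abs_one, one_mul]
  have A : min (v 1) (v 2) = v 1 := min_eq_left h12.le
  have B : max (v 1) (v 2) = v 2 := max_eq_right h12.le
  have C : min (v 1) (v 1 + v 2) = v 1 := min_eq_left (by linarith)
  have D : max (v 1) (v 1 + v 2) = v 1 + v 2 := max_eq_right (by linarith)
  have E : min (v 1 + v 2) (v 2) = v 2 := min_eq_right (by linarith)
  have F : max (v 1 + v 2) (v 2) = v 1 + v 2 := max_eq_left (by linarith)
  rw [A, B, C, D, E, F]
  rw [min_eq_left h01.le, max_eq_right h02.le,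
    max_eq_right (by linarith : v 0 ≤ v 1 + v 2),
    min_eq_left h02.le,
    min_eq_right (by linarith : v 1 ≤ v 0 + v 2),
    max_eq_left (by linarith : v 2 ≤ v 0 + v 2)]
  constructor
  · ring_nf
  · have n1 : v 1 ≠ 0 := ne_of_gt h1
    have n2 : v 2 ≠ 0 := ne_of_gt h2
    have n3 : v 0 + v 2 ≠ 0 := by positivity
    have n4 : v 1 + v 2 ≠ 0 := by positivity
    have n5 : v 0 + v 1 + v 2 ≠ 0 := by positivity
    ring_nf
    field_simp
    ring
end
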